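/- Let B and C be the central binomial and Catalan generating functions over ℚ and let T_M = B·(C ∘ (zC²)), where ∘ denotes composition of formal power series (well-defined since zC² has zero constant term). For every n ≥ 0, the coefficient of z^n in T_M equals ∑_{k=0}^n (1/(k+1))·binom(2n, n−k)·binom(2k, k); that is, the number of embedded new type trees with n edges is ∑_{k=0}^n (1/(k+1))·binom(2n,n−k)·binom(2k,k). -/

import Mathlib

open PowerSeries Finset

/-- The central binomial generating function `B = ∑ binom(2n,n) zⁿ` over `ℚ`. -/
noncomputable def Bgf : PowerSeries ℚ := PowerSeries.mk fun n => ((2 * n).choose n : ℚ)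

/-- The Catalan generating function `C = ∑ Cₙ zⁿ` over `ℚ`. -/
noncomputable def Cgf : PowerSeries ℚ := PowerSeries.mk fun n => (catalan n : ℚ)

/-- Composition `F ∘ a` of formal power series (intended for `a` with zero constant
term, in which case only the terms with `k ≤ n` contribute to the coefficient of `zⁿ`
in `∑ₖ ([zᵏ]F)·aᵏ`, so the finite sum below is the full composition). -/
noncomputable def PScomp (F a : PowerSeries ℚ) : PowerSeries ℚ :=
  PowerSeries.mk fun n => ∑ k ∈ Finset.range (n + 1),
    PowerSeries.coeff (R := ℚ) k F * PowerSeries.coeff (R := ℚ) n (a ^ k)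

/-- `T_M = B·(C ∘ (zC²))`, the generating function for embedded new type trees. -/
noncomputable def TM : PowerSeries ℚ := Bgf * PScomp Cgf (PowerSeries.X * Cgf ^ 2)

lemma Cgf_eq : Cgf = 1 + PowerSeries.X * Cgf ^ 2 := by
  ext n
  cases n with
  | zero => simp [Cgf]
  | succ n =>
    rw [map_add, coeff_succ_X_mul]
    simp only [Cgf, coeff_mk, coeff_one, Nat.succ_ne_zero, if_false, zero_add]
    rw [pow_two, PowerSeries.coeff_mul, catalan_succ']
    push_cast
    simp [Cgf]

lemma key : ∀ n m : ℕ, PowerSeries.coeff (R := ℚ) n (Bgf * Cgf ^ m) = ((2 * n + m).choose n : ℚ) := by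
  intro n
  induction n with
  | zero =>
    intro m
    simp only [PowerSeries.coeff_zero_eq_constantCoeff, map_mul, map_pow]
    simp [Bgf, Cgf, ← PowerSeries.coeff_zero_eq_constantCoeff_apply]
  | succ n ih =>
    intro m
    induction m with
    | zero => simp [Bgf]
    | succ m ihm =>
      have h1 : Bgf * Cgf ^ (m + 1) = Bgf * Cgf ^ m + PowerSeries.X * (Bgf * Cgf ^ (m + 2)) := by
        have h : Bgf * Cgf ^ (m + 1) = (Bgf * Cgf ^ m) * (1 + PowerSeries.X * Cgf ^ 2) := by
          rw [← Cgf_eq]; ring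
        rw [h]; ring
      rw [h1, map_add, coeff_succ_X_mul, ihm, ih (m + 2)]
      have h2 : 2 * (n + 1) + (m + 1) = (2 * (n + 1) + m) + 1 := by ring
      have h3 : 2 * n + (m + 2) = 2 * (n + 1) + m := by ring
      rw [h2, h3, Nat.choose_succ_succ' (2 * (n + 1) + m) n]
      push_cast
      ring

lemma apow (k : ℕ) : (PowerSeries.X * Cgf ^ 2) ^ k = PowerSeries.X ^ k * Cgf ^ (2 * k) := by
  rw [mul_pow, pow_mul]

lemma catalan_cast (k : ℕ) : (catalan k : ℚ) = 1 / (k + 1 : ℚ) * ((2 * k).choose k : ℚ) := by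
  have h := succ_mul_catalan_eq_centralBinom k
  have h' : ((k + 1 : ℕ) * catalan k : ℚ) = ((2 * k).choose k : ℚ) := by
    rw [Nat.centralBinom] at h; exact_mod_cast congrArg (Nat.cast : ℕ → ℚ) h
  push_cast at h'
  field_simp
  linarith [h']

/-- `[zⁿ] T_M = ∑ₖ (1/(k+1))·binom(2n, n−k)·binom(2k, k)`. -/
theorem stmt8 (n : ℕ) :
    PowerSeries.coeff (R := ℚ) n TM =
      ∑ k ∈ Finset.range (n + 1),
        (1 / (k + 1 : ℚ)) * ((2 * n).choose (n - k) : ℚ) * ((2 * k).choose k : ℚ) := by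
  rw [TM, PowerSeries.coeff_mul]
  have step1 : ∀ p ∈ antidiagonal n,
      PowerSeries.coeff (R := ℚ) p.1 Bgf * PowerSeries.coeff (R := ℚ) p.2 (PScomp Cgf (PowerSeries.X * Cgf ^ 2))
        = ∑ k ∈ range (n + 1), PowerSeries.coeff (R := ℚ) k Cgf *
            (PowerSeries.coeff (R := ℚ) p.1 Bgf *
              PowerSeries.coeff (R := ℚ) p.2 ((PowerSeries.X * Cgf ^ 2) ^ k)) := by
    intro p hp
    have hp2 : p.2 ≤ n := by
      rw [Finset.HasAntidiagonal.mem_antidiagonal] at hp; omega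
    rw [PScomp, coeff_mk]
    rw [Finset.sum_subset (Finset.range_subset_range.2 (by omega : p.2 + 1 ≤ n + 1))]
    · rw [Finset.mul_sum]; apply Finset.sum_congr rfl; intro k _; ring
    · intro k _ hk
      rw [Finset.mem_range, not_lt] at hk
      rw [apow, PowerSeries.coeff_X_pow_mul', if_neg (by omega), mul_zero]
  rw [Finset.sum_congr rfl step1, Finset.sum_comm]
  apply Finset.sum_congr rfl
  intro k hk
  rw [Finset.mem_range] at hk
  have hk' : k ≤ n := by omega
  rw [← Finset.mul_sum, ← PowerSeries.coeff_mul]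
  have h1 : Bgf * (PowerSeries.X * Cgf ^ 2) ^ k = PowerSeries.X ^ k * (Bgf * Cgf ^ (2 * k)) := by
    rw [apow]; ring
  rw [h1, PowerSeries.coeff_X_pow_mul', if_pos hk', key (n - k) (2 * k)]
  have h2 : 2 * (n - k) + 2 * k = 2 * n := by omega
  rw [h2]
  simp only [Cgf, coeff_mk]
  rw [catalan_cast]
  ring
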